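/- arXiv:math/0405224 — 2 statements merged into one kernel-verified Lean document; each statement's English description precedes it below -/
import Mathlib

section
/- Fix a base point z₀ ∈ ℍ × ℍ and a point z = (z₁,z₂) ∈ ℍ × ℍ. Let ξ = (ξ₁,ξ₂) ∈ ∂ℍ × ∂ℍ, let g = (g₁,g₂) ∈ G = PSL(2,ℝ) × PSL(2,ℝ), let T ∈ ℝ, and let a = (a₁, 1) ∈ A with a₁ = ±diag(λ,λ⁻¹) ≠ 1. If there are infinitely many positive integers n such that β_ξ(g·aⁿ·z, z₀) > T (i.e. g·aⁿ·z lies in the horoball HB(ξ,T)), then ξ₁ = g₁(a₁⁺), where a₁⁺ is the attractive fixed point of a₁ in ∂ℍ (a₁⁺ = ∞ if λ > 1 and a₁⁺ = 0 if λ < 1). Symmetrically, if a = (1, a₂) with a₂ = ±diag(λ,λ⁻¹) ≠ 1, the same hypothesis implies ξ₂ = g₂(a₂⁺). -/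
noncomputable section

open Matrix MatrixGroups MeasureTheory Filter Topology OnePoint
open scoped UpperHalfPlane

/-- `SL(2, ℝ)`. -/
abbrev SL2 : Type := Matrix.SpecialLinearGroup (Fin 2) ℝ

/-- `PSL(2, ℝ) = SL(2, ℝ)/{±1}`, the quotient of `SL(2, ℝ)` by its center. -/
abbrev PSL2 : Type := Matrix.ProjectiveSpecialLinearGroup (Fin 2) ℝ

/-- Topology on `SL(2, ℝ)`, induced from the space of matrices. -/
instance : TopologicalSpace SL2 :=
  TopologicalSpace.induced (fun g : SL2 => (g : Matrix (Fin 2) (Fin 2) ℝ)) inferInstance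

/-- The quotient topology on `PSL(2, ℝ)`. -/
instance : TopologicalSpace PSL2 := instTopologicalSpaceQuotient

instance : MeasurableSpace PSL2 := borel PSL2

/-- The group `G = PSL(2, ℝ) × PSL(2, ℝ)`. -/
abbrev G2 : Type := PSL2 × PSL2

/-- The projection `SL(2, ℝ) → PSL(2, ℝ)`. -/
def pr : SL2 →* PSL2 := QuotientGroup.mk' (Subgroup.center SL2)

/-- A representative in `SL(2, ℝ)` of an element of `PSL(2, ℝ)`.  (All the constructions
below built from `rep` are in fact independent of the choice of representative, because the
two lifts of an element of `PSL(2, ℝ)` differ only by sign.) -/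
def rep (x : PSL2) : SL2 := Quotient.out x

/-- The boundary `∂ℍ = ℝ ∪ {∞}` of the upper half-plane. -/
abbrev Bdry : Type := OnePoint ℝ

/-- The extended Möbius action of `SL(2, ℝ)` on `∂ℍ = ℝ ∪ {∞}`. -/
def mobSL (g : SL2) (p : Bdry) : Bdry :=
  p.elim (if g 1 0 = 0 then ∞ else ((g 0 0 / g 1 0 : ℝ) : Bdry))
    (fun x => if g 1 0 * x + g 1 1 = 0 then ∞
      else (((g 0 0 * x + g 0 1) / (g 1 0 * x + g 1 1) : ℝ) : Bdry))

/-- The extended Möbius action of `PSL(2, ℝ)` on the boundary `∂ℍ = ℝ ∪ {∞}`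
(independent of the choice of representative, since `-g` and `g` act alike). -/
def mob (x : PSL2) (p : Bdry) : Bdry := mobSL (rep x) p

/-- The Möbius action of `PSL(2, ℝ)` on the upper half-plane `ℍ`
(independent of the choice of representative, since `-g` and `g` act alike). -/
def hact (x : PSL2) (z : ℍ) : ℍ := rep x • z

/-- The componentwise action of `G` on `ℍ × ℍ`. -/
def hact2 (x : G2) (z : ℍ × ℍ) : ℍ × ℍ := (hact x.1 z.1, hact x.2 z.2)

/-- The componentwise action of `G` on the Furstenberg boundary `F = ∂ℍ × ∂ℍ`. -/
def mob2 (x : G2) (ξ : Bdry × Bdry) : Bdry × Bdry := (mob x.1 ξ.1, mob x.2 ξ.2)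

/-- The diagonal matrix `diag (exp t, exp (-t))` in `SL(2, ℝ)`; as `t` ranges over `ℝ`,
these (together with their negatives) are exactly the diagonal matrices `±diag (λ, λ⁻¹)`
with `λ > 0`. -/
def dm (t : ℝ) : SL2 :=
  ⟨!![Real.exp t, 0; 0, Real.exp (-t)], by
    simp [Matrix.det_fin_two_of, ← Real.exp_add]⟩

lemma dm_mul (t s : ℝ) : dm t * dm s = dm (t + s) := by
  apply Subtype.ext
  rw [Matrix.SpecialLinearGroup.coe_mul]
  simp only [dm]
  rw [Matrix.mul_fin_two]
  norm_num [← Real.exp_add]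
  ring_nf

lemma dm_zero : dm 0 = 1 := by
  apply Subtype.ext
  simp [dm, Matrix.one_fin_two]

/-- The maximal diagonal subgroup `A` of `G = PSL(2, ℝ) × PSL(2, ℝ)`. -/
def Adiag : Subgroup G2 where
  carrier := {x | ∃ t s : ℝ, x = (pr (dm t), pr (dm s))}
  mul_mem' := by
    rintro _ _ ⟨t, s, rfl⟩ ⟨t', s', rfl⟩
    exact ⟨t + t', s + s', by simp [Prod.ext_iff, ← _root_.map_mul, dm_mul]⟩
  one_mem' := ⟨0, 0, by simp [dm_zero, Prod.ext_iff]⟩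
  inv_mem' := by
    rintro _ ⟨t, s, rfl⟩
    refine ⟨-t, -s, ?_⟩
    have h1 : dm (-t) * dm t = 1 := by rw [dm_mul]; simpa using dm_zero
    have h2 : dm (-s) * dm s = 1 := by rw [dm_mul]; simpa using dm_zero
    simp [Prod.ext_iff, eq_comm, eq_inv_iff_mul_eq_one, ← _root_.map_mul, h1, h2]

/-- The diagonal sub-semigroup `A⁺` of `G` (diagonal entries `λᵢ = exp tᵢ ≥ 1`). -/
def Apos : Set G2 := {x | ∃ t s : ℝ, 0 ≤ t ∧ 0 ≤ s ∧ x = (pr (dm t), pr (dm s))}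

/-- The absolute value of the trace, well defined on `PSL(2, ℝ)`. -/
def trAbs (x : PSL2) : ℝ := |((rep x : Matrix (Fin 2) (Fin 2) ℝ)).trace|

/-- An element of `PSL(2, ℝ)` is hyperbolic if `|trace| > 2`. -/
def IsHyperbolicPSL (x : PSL2) : Prop := 2 < trAbs x

/-- An element of `PSL(2, ℝ)` is parabolic if it is nontrivial and `|trace| = 2`. -/
def IsParabolicPSL (x : PSL2) : Prop := x ≠ 1 ∧ trAbs x = 2

/-- An element of `PSL(2, ℝ)` is elliptic if `|trace| < 2`. -/
def IsEllipticPSL (x : PSL2) : Prop := trAbs x < 2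

/-- The dominant eigenvalue `(|tr| + √(tr² - 4))/2` of (a lift of) an element of
`PSL(2, ℝ)`; for a hyperbolic element this is its dominant (> 1) eigenvalue. -/
def domEig (x : PSL2) : ℝ := (trAbs x + Real.sqrt (trAbs x ^ 2 - 4)) / 2

/-- An element of `G` is hyperbolic if both components are. -/
def IsHyperbolicG (γ : G2) : Prop := IsHyperbolicPSL γ.1 ∧ IsHyperbolicPSL γ.2

/-- An element of `G` is parabolic if both components are. -/
def IsParabolicG (γ : G2) : Prop := IsParabolicPSL γ.1 ∧ IsParabolicPSL γ.2

/-- An element of `G` is elliptic if both components are. -/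
def IsEllipticG (γ : G2) : Prop := IsEllipticPSL γ.1 ∧ IsEllipticPSL γ.2

/-- A nontrivial element of `G` is mixed if its two components are not of the same kind. -/
def IsMixed (γ : G2) : Prop :=
  γ ≠ 1 ∧ ¬ IsHyperbolicG γ ∧ ¬ IsParabolicG γ ∧ ¬ IsEllipticG γ

/-- A hyperbolic element of `G` is hyper-regular if the dominant eigenvalues of its two
components are distinct. -/
def IsHyperRegular (γ : G2) : Prop := IsHyperbolicG γ ∧ domEig γ.1 ≠ domEig γ.2

/-- `Γ` is an irreducible lattice of `G = PSL(2, ℝ) × PSL(2, ℝ)`: it is discrete, of finite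
covolume for Haar measure, both coordinate projections have dense image, and `Γ` meets the
kernel of each coordinate projection trivially. -/
structure IsIrreducibleLattice (Γ : Subgroup G2) : Prop where
  discrete : DiscreteTopology Γ
  finiteCovolume : ∃ μ : Measure G2, μ.IsHaarMeasure ∧
    ∃ s : Set G2, IsFundamentalDomain Γ s μ ∧ μ s < ⊤
  dense_fst : Dense (Prod.fst '' (Γ : Set G2))
  dense_snd : Dense (Prod.snd '' (Γ : Set G2))
  ker_fst : ∀ γ ∈ Γ, γ.1 = 1 → γ = 1
  ker_snd : ∀ γ ∈ Γ, γ.2 = 1 → γ = 1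

/-- The quotient `Γ \ G` by right cosets, with the quotient topology. -/
abbrev RQ (Γ : Subgroup G2) : Type := Quotient (QuotientGroup.rightRel Γ)

/-- The class `Γ g` of `g` in `Γ \ G`. -/
def rmk (Γ : Subgroup G2) (g : G2) : RQ Γ := Quotient.mk (QuotientGroup.rightRel Γ) g

/-- The orbit `x A` of `x = Γ g` in `Γ \ G` under right translation by `A`. -/
def orbA (Γ : Subgroup G2) (g : G2) : Set (RQ Γ) := {y | ∃ a ∈ Adiag, y = rmk Γ (g * a)}

/-- The semi-orbit `x A⁺` of `x = Γ g` in `Γ \ G` under right translation by `A⁺`. -/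
def orbApos (Γ : Subgroup G2) (g : G2) : Set (RQ Γ) := {y | ∃ a ∈ Apos, y = rmk Γ (g * a)}

/-- The inclusion `ℍ ⊆ ℂ ∪ {∞}` into the one-point compactification of `ℂ`. -/
def hToC (z : ℍ) : OnePoint ℂ := ((z : ℂ) : OnePoint ℂ)

/-- The inclusion `∂ℍ = ℝ ∪ {∞} ⊆ ℂ ∪ {∞}`. -/
def bToC (p : Bdry) : OnePoint ℂ := OnePoint.map (fun x : ℝ => (x : ℂ)) p

/-- The Busemann cocycle `β_ξ(x, y)` on `ℍ`, for `ξ ∈ ∂ℍ = ℝ ∪ {∞}`: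
`β_∞(x, y) = log (Im x / Im y)` and
`β_s(x, y) = log ((Im x / |x - s|²) · (|y - s|² / Im y))` for `s ∈ ℝ`. -/
def buse (ξ : Bdry) (x y : ℍ) : ℝ :=
  ξ.elim (Real.log (x.im / y.im))
    (fun s => Real.log ((x.im / Complex.normSq ((x : ℂ) - (s : ℂ))) *
      (Complex.normSq ((y : ℂ) - (s : ℂ)) / y.im)))

/-- The Busemann cocycle on `ℍ × ℍ`, the sum of the Busemann cocycles of the factors. -/
def buse2 (ξ : Bdry × Bdry) (z w : ℍ × ℍ) : ℝ := buse ξ.1 z.1 w.1 + buse ξ.2 z.2 w.2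

lemma sl_smul_coe (h : SL2) (w : ℍ) :
    ((h • w : ℍ) : ℂ) = ((h 0 0 : ℂ) * w + h 0 1) / ((h 1 0 : ℂ) * w + h 1 1) := by
  rw [UpperHalfPlane.specialLinearGroup_apply]; simp

lemma center_smul {c : SL2} (hc : c ∈ Subgroup.center SL2) (w : ℍ) : c • w = w := by
  obtain ⟨r, hr1, hr2⟩ := Matrix.SpecialLinearGroup.mem_center_iff.mp hc
  have hr0 : (r : ℂ) ≠ 0 := by
    rintro h
    rw [Complex.ofReal_eq_zero] at h
    rw [h] at hr1; simp at hr1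
  have e00 : c 0 0 = r := by rw [← hr2]; simp
  have e01 : c 0 1 = 0 := by rw [← hr2]; simp [Matrix.scalar_apply, Matrix.diagonal_apply]
  have e10 : c 1 0 = 0 := by rw [← hr2]; simp [Matrix.scalar_apply, Matrix.diagonal_apply]
  have e11 : c 1 1 = r := by rw [← hr2]; simp
  have hc2 := sl_smul_coe c w
  rw [e00, e01, e10, e11] at hc2
  have hcoe : ((c • w : ℍ) : ℂ) = (w : ℂ) := by
    rw [hc2]; push_cast
    rw [mul_comm, zero_mul, add_zero, zero_add, mul_div_assoc, div_self hr0, mul_one]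
  exact UpperHalfPlane.ext hcoe

lemma pr_rep (x : PSL2) : pr (rep x) = x := Quotient.out_eq x

lemma hact_pr (h : SL2) (w : ℍ) : hact (pr h) w = h • w := by
  have h1 : pr (rep (pr h)) = pr h := pr_rep _
  have h2 : h⁻¹ * rep (pr h) ∈ Subgroup.center SL2 := by
    rw [← QuotientGroup.eq]
    exact h1.symm
  have h3 : rep (pr h) = h * (h⁻¹ * rep (pr h)) := by group
  show rep (pr h) • w = h • w
  rw [h3, mul_smul, center_smul h2]

lemma hact_one (w : ℍ) : hact 1 w = w := by
  have h : (1 : PSL2) = pr 1 := by simp [pr]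
  rw [h, hact_pr, one_smul]

lemma dm_pow (t : ℝ) (n : ℕ) : pr (dm t) ^ n = pr (dm (n * t)) := by
  rw [← map_pow]
  congr 1
  induction n with
  | zero => simp [dm_zero]
  | succ n ih =>
    rw [pow_succ, ih, dm_mul]
    congr 1
    push_cast; ring

lemma dm_smul_coe (s : ℝ) (w : ℍ) :
    ((dm s • w : ℍ) : ℂ) = ((Real.exp (2 * s) : ℝ) : ℂ) * w := by
  rw [sl_smul_coe]
  have e00 : dm s 0 0 = Real.exp s := by simp [dm]
  have e01 : dm s 0 1 = 0 := by simp [dm]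
  have e10 : dm s 1 0 = 0 := by simp [dm]
  have e11 : dm s 1 1 = Real.exp (-s) := by simp [dm]
  rw [e00, e01, e10, e11]
  push_cast
  rw [zero_mul, add_zero, zero_add]
  rw [div_eq_iff (Complex.exp_ne_zero _)]
  have h1 : Complex.exp (2*(s:ℂ)) * Complex.exp (-(s:ℂ)) = Complex.exp (s:ℂ) := by
    rw [← Complex.exp_add]; ring_nf
  linear_combination -(w : ℂ) * h1

lemma imF {a b c d : ℝ} (hdet : a * d - b * c = 1) (w : ℂ) :
    (((a : ℂ) * w + b) / ((c : ℂ) * w + d)).im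
      = w.im / Complex.normSq ((c : ℂ) * w + d) := by
  rw [Complex.div_im]
  simp only [Complex.add_im, Complex.add_re, Complex.mul_im, Complex.mul_re,
    Complex.ofReal_re, Complex.ofReal_im]
  rw [div_sub_div_same]
  congr 1
  linear_combination w.im * hdet

lemma buse_coe (s : ℝ) (x y : ℍ) :
    buse ((s : ℝ) : Bdry) x y = Real.log ((x.im / Complex.normSq ((x : ℂ) - (s:ℂ))) *
      (Complex.normSq ((y : ℂ) - (s:ℂ)) / y.im)) := rfl

lemma buse_infty (x y : ℍ) : buse ∞ x y = Real.log (x.im / y.im) := rfl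

lemma normSq_sub_real_pos (w : ℍ) (s : ℝ) : 0 < Complex.normSq ((w : ℂ) - s) := by
  rw [Complex.normSq_pos]
  intro h
  have h2 : ((w : ℂ) - s).im = 0 := by rw [h]; simp
  simp only [Complex.sub_im, Complex.ofReal_im, sub_zero, UpperHalfPlane.coe_im] at h2
  exact w.im_pos.ne' h2

lemma im_sq_le_normSq_sub (w : ℍ) (s : ℝ) :
    (w.im) ^ 2 ≤ Complex.normSq ((w : ℂ) - s) := by
  rw [Complex.normSq_apply]
  have h1 : ((w : ℂ) - s).im = w.im := by simp
  rw [h1]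
  nlinarith [sq_nonneg (((w : ℂ) - s).re)]

lemma log_mul_atBot {H : ℕ → ℝ} (hpos : ∀ n, 0 < H n) (h0 : Tendsto H atTop (𝓝 0))
    {C : ℝ} (hC : 0 < C) :
    Tendsto (fun n => Real.log (H n * C)) atTop atBot := by
  have h1 : Tendsto (fun n => H n * C) atTop (𝓝[>] 0) := by
    rw [tendsto_nhdsWithin_iff]
    exact ⟨by simpa using h0.mul_const C, .of_forall fun n => mul_pos (hpos n) hC⟩
  exact Real.tendsto_log_nhdsGT_zero.comp h1

lemma buse_atBot_of_im_atTop (s : ℝ) (y : ℍ) (x : ℕ → ℍ)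
    (hx : Tendsto (fun n => (x n).im) atTop atTop) :
    Tendsto (fun n => buse ((s : ℝ) : Bdry) (x n) y) atTop atBot := by
  have hC : 0 < Complex.normSq ((y : ℂ) - s) / y.im :=
    div_pos (normSq_sub_real_pos y s) y.im_pos
  have hpos : ∀ n, 0 < (x n).im / Complex.normSq (((x n) : ℂ) - s) :=
    fun n => div_pos (x n).im_pos (normSq_sub_real_pos (x n) s)
  have hle : ∀ n, (x n).im / Complex.normSq (((x n) : ℂ) - s) ≤ ((x n).im)⁻¹ := by
    intro n
    have h1 : (x n).im / Complex.normSq (((x n) : ℂ) - s) ≤ (x n).im / ((x n).im) ^ 2 := by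
      apply div_le_div_of_nonneg_left (x n).im_pos.le (pow_pos (x n).im_pos 2)
        (im_sq_le_normSq_sub (x n) s)
    have h2 : (x n).im / ((x n).im) ^ 2 = ((x n).im)⁻¹ := by
      rw [sq, div_mul_eq_div_div, div_self (x n).im_pos.ne', one_div]
    rwa [h2] at h1
  have h0 : Tendsto (fun n => (x n).im / Complex.normSq (((x n) : ℂ) - s)) atTop (𝓝 0) :=
    squeeze_zero (fun n => (hpos n).le) hle hx.inv_tendsto_atTop
  simp only [buse_coe]
  exact log_mul_atBot hpos h0 hC

lemma buse_atBot_of_tendsto_real (r : ℝ) (y : ℍ) (x : ℕ → ℍ)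
    (hx : Tendsto (fun n => ((x n) : ℂ)) atTop (𝓝 ((r : ℝ) : ℂ)))
    (ξ : Bdry) (hne : ξ ≠ ((r : ℝ) : Bdry)) :
    Tendsto (fun n => buse ξ (x n) y) atTop atBot := by
  have him : Tendsto (fun n => (x n).im) atTop (𝓝 0) := by
    have h1 := (Complex.continuous_im.tendsto (((r : ℝ)) : ℂ)).comp hx
    simpa [Function.comp_def] using h1
  induction ξ using OnePoint.rec with
  | infty =>
    simp only [buse_infty, div_eq_mul_inv]
    exact log_mul_atBot (fun n => (x n).im_pos) him (inv_pos.mpr y.im_pos)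
  | coe s =>
    have hsr : s ≠ r := fun h => hne (by rw [h])
    have hd : Tendsto (fun n => Complex.normSq (((x n) : ℂ) - s)) atTop
        (𝓝 (Complex.normSq (((r : ℝ) : ℂ) - s))) :=
      (Complex.continuous_normSq.tendsto _).comp (hx.sub tendsto_const_nhds)
    have hdne : Complex.normSq (((r : ℝ) : ℂ) - s) ≠ 0 := by
      intro h
      have h2 := Complex.normSq_eq_zero.mp h
      rw [sub_eq_zero] at h2
      exact hsr (Complex.ofReal_inj.mp h2).symm
    have h0 : Tendsto (fun n => (x n).im / Complex.normSq (((x n) : ℂ) - s)) atTop (𝓝 0) := by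
      have h3 := him.div hd hdne
      simpa [Pi.div_def] using h3
    simp only [buse_coe]
    exact log_mul_atBot (fun n => div_pos (x n).im_pos (normSq_sub_real_pos (x n) s)) h0
      (div_pos (normSq_sub_real_pos y s) y.im_pos)

lemma ne_zero_of_im_ne {w : ℂ} (h : w.im ≠ 0) : w ≠ 0 := fun h0 => h (by rw [h0]; simp)

lemma key (g1 : PSL2) (z y : ℍ) (t : ℝ) (ht : t ≠ 0) (ξ : Bdry)
    (hξ : ξ ≠ mob g1 (if 0 < t then ∞ else ((0 : ℝ) : Bdry))) :
    Tendsto (fun n : ℕ => buse ξ (hact g1 (hact (pr (dm t) ^ n) z)) y) atTop atBot := by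
  have hpt : ∀ n : ℕ, hact g1 (hact (pr (dm t) ^ n) z) = rep g1 • (dm (n * t) • z) := by
    intro n; rw [dm_pow, hact_pr]; rfl
  set h : SL2 := rep g1 with hh
  set a := h 0 0 with ha; set b := h 0 1 with hb
  set c := h 1 0 with hc0; set d := h 1 1 with hd0
  have hdet : a * d - b * c = 1 := by
    have h2 := h.2
    rwa [Matrix.det_fin_two] at h2
  set u := Real.exp (2 * t) with hu
  have hu0 : 0 < u := Real.exp_pos _
  have hwn : ∀ n : ℕ, ((dm (n * t) • z : ℍ) : ℂ) = ((u ^ n : ℝ) : ℂ) * z := by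
    intro n
    rw [dm_smul_coe]
    congr 2
    rw [hu, ← Real.exp_nat_mul]
    ring_nf
  have hxcoe : ∀ n : ℕ, ((h • (dm (n * t) • z) : ℍ) : ℂ)
      = ((a : ℂ) * (((u ^ n : ℝ) : ℂ) * z) + b) / ((c : ℂ) * (((u ^ n : ℝ) : ℂ) * z) + d) := by
    intro n; rw [sl_smul_coe, hwn n]
  have hxim : ∀ n : ℕ, (h • (dm (n * t) • z) : ℍ).im
      = (u ^ n * z.im) / Complex.normSq ((c : ℂ) * (((u ^ n : ℝ) : ℂ) * z) + d) := by
    intro n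
    rw [← UpperHalfPlane.coe_im, hxcoe n, imF hdet]
    congr 2
    exact Complex.im_ofReal_mul _ _
  rcases lt_or_gt_of_ne ht with htneg | htpos
  · -- t < 0 : attractive point 0
    rw [if_neg (not_lt.mpr htneg.le)] at hξ
    have hmob0 : mob g1 ((0 : ℝ) : Bdry) = if d = 0 then ∞ else ((b / d : ℝ) : Bdry) := by
      show mobSL h ((0 : ℝ) : Bdry) = _
      have h1 : mobSL h ((0 : ℝ) : Bdry)
          = if c * 0 + d = 0 then ∞ else (((a * 0 + b) / (c * 0 + d) : ℝ) : Bdry) := rfl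
      rw [h1]
      norm_num

    have hu1 : u < 1 := by
      rw [hu]; exact Real.exp_lt_one_iff.mpr (by linarith)
    have hvn : Tendsto (fun n : ℕ => u ^ n) atTop (𝓝 0) :=
      tendsto_pow_atTop_nhds_zero_of_lt_one hu0.le hu1
    by_cases hd : d = 0
    · rw [hmob0, if_pos hd] at hξ
      have hcne : c ≠ 0 := by
        intro h0; rw [hd, h0] at hdet; simp at hdet
      induction ξ using OnePoint.rec with
      | infty => exact absurd rfl hξ
      | coe s =>
        have hz0 : Complex.normSq (z : ℂ) ≠ 0 := by
          simpa [Complex.normSq_eq_zero] using z.ne_zero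
        have himeq : ∀ n : ℕ, (h • (dm (n * t) • z) : ℍ).im
            = (z.im / (c ^ 2 * Complex.normSq (z : ℂ))) * (u⁻¹) ^ n := by
          intro n
          rw [hxim n, hd]
          push_cast
          rw [add_zero, Complex.normSq_mul, Complex.normSq_mul, Complex.normSq_ofReal,
            map_pow, Complex.normSq_ofReal]
          have hun : u ^ n ≠ 0 := by positivity
          field_simp
          ring
          rw [inv_pow, pow_mul, sq, mul_assoc, mul_inv_cancel₀ hun, mul_one]
        have him : Tendsto (fun n : ℕ => (h • (dm (n * t) • z) : ℍ).im) atTop atTop := by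
          apply Tendsto.congr (fun n => (himeq n).symm)
          apply Tendsto.const_mul_atTop
            (div_pos z.im_pos (mul_pos
              (lt_of_le_of_ne (sq_nonneg c) (Ne.symm (pow_ne_zero 2 hcne)))
              (Complex.normSq_pos.mpr z.ne_zero)))
          exact tendsto_pow_atTop_atTop_of_one_lt ((one_lt_inv₀ hu0).mpr hu1)
        exact Tendsto.congr (fun n => by rw [hpt n])
          (buse_atBot_of_im_atTop s y (fun n => h • (dm (n * t) • z)) him)
    · rw [hmob0, if_neg hd] at hξ
      have hwn0 : Tendsto (fun n : ℕ => ((u ^ n : ℝ) : ℂ)) atTop (𝓝 0) := by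
        have h2 := (Complex.continuous_ofReal.tendsto 0).comp hvn
        simpa [Function.comp_def] using h2
      have hlim : Tendsto (fun n : ℕ => ((h • (dm (n * t) • z) : ℍ) : ℂ)) atTop
          (𝓝 ((b / d : ℝ) : ℂ)) := by
        have hnum : Tendsto (fun n : ℕ => (a : ℂ) * (((u ^ n : ℝ) : ℂ) * z) + b) atTop
            (𝓝 (b : ℂ)) := by
          have h2 := ((hwn0.mul_const (z : ℂ)).const_mul (a : ℂ)).add_const (b : ℂ)
          simpa using h2
        have hden : Tendsto (fun n : ℕ => (c : ℂ) * (((u ^ n : ℝ) : ℂ) * z) + d) atTop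
            (𝓝 (d : ℂ)) := by
          have h2 := ((hwn0.mul_const (z : ℂ)).const_mul (c : ℂ)).add_const (d : ℂ)
          simpa using h2
        have hdne : (d : ℂ) ≠ 0 := Complex.ofReal_ne_zero.mpr hd
        have hq := hnum.div hden hdne
        apply Tendsto.congr (fun n => (hxcoe n).symm)
        rwa [show (b : ℂ) / (d : ℂ) = ((b / d : ℝ) : ℂ) by push_cast; ring] at hq
      exact Tendsto.congr (fun n => by rw [hpt n])
        (buse_atBot_of_tendsto_real (b / d) y _ hlim ξ hξ)
  · rw [if_pos htpos] at hξ
    have hmobi : mob g1 ∞ = if c = 0 then ∞ else ((a / c : ℝ) : Bdry) := rfl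
    have hu1 : 1 < u := by
      rw [hu]; exact Real.one_lt_exp_iff.mpr (by linarith)
    by_cases hcz : c = 0
    · rw [hmobi, if_pos hcz] at hξ
      have hdne : d ≠ 0 := by
        intro h0; rw [hcz, h0] at hdet; simp at hdet
      induction ξ using OnePoint.rec with
      | infty => exact absurd rfl hξ
      | coe s =>
        have himeq : ∀ n : ℕ, (h • (dm (n * t) • z) : ℍ).im = (z.im / d ^ 2) * u ^ n := by
          intro n
          rw [hxim n, hcz]
          push_cast
          rw [zero_mul, zero_add, Complex.normSq_ofReal]
          field_simp
        have him : Tendsto (fun n : ℕ => (h • (dm (n * t) • z) : ℍ).im) atTop atTop := by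
          apply Tendsto.congr (fun n => (himeq n).symm)
          exact Tendsto.const_mul_atTop (div_pos z.im_pos (by positivity))
            (tendsto_pow_atTop_atTop_of_one_lt hu1)
        exact Tendsto.congr (fun n => by rw [hpt n])
          (buse_atBot_of_im_atTop s y (fun n => h • (dm (n * t) • z)) him)
    · rw [hmobi, if_neg hcz] at hξ
      have hvz : Tendsto (fun n : ℕ => ((u⁻¹ ^ n : ℝ) : ℂ)) atTop (𝓝 0) := by
        have h2 : Tendsto (fun n : ℕ => u⁻¹ ^ n) atTop (𝓝 0) :=
          tendsto_pow_atTop_nhds_zero_of_lt_one (by positivity) ((inv_lt_one₀ hu0).mpr hu1)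
        simpa [Function.comp_def] using (Complex.continuous_ofReal.tendsto 0).comp h2
      have hrew : ∀ n : ℕ, ((h • (dm (n * t) • z) : ℍ) : ℂ)
          = ((a : ℂ) * z + (b : ℂ) * ((u⁻¹ ^ n : ℝ) : ℂ))
            / ((c : ℂ) * z + (d : ℂ) * ((u⁻¹ ^ n : ℝ) : ℂ)) := by
        intro n
        rw [hxcoe n]
        have h1 : ((c : ℂ) * (((u ^ n : ℝ) : ℂ) * z) + d) ≠ 0 := by
          apply ne_zero_of_im_ne
          have he : ((c : ℂ) * (((u ^ n : ℝ) : ℂ) * z) + (d : ℂ)).im = c * (u ^ n * z.im) := by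
            simp only [Complex.add_im, Complex.im_ofReal_mul, Complex.ofReal_im,
              UpperHalfPlane.coe_im, add_zero]
          rw [he]
          exact mul_ne_zero hcz (mul_ne_zero (by positivity) z.im_pos.ne')
        have h2 : ((c : ℂ) * z + (d : ℂ) * ((u⁻¹ ^ n : ℝ) : ℂ)) ≠ 0 := by
          apply ne_zero_of_im_ne
          have he : ((c : ℂ) * z + (d : ℂ) * ((u⁻¹ ^ n : ℝ) : ℂ)).im = c * z.im := by
            simp only [Complex.add_im, Complex.im_ofReal_mul, Complex.ofReal_im,
              UpperHalfPlane.coe_im, mul_zero, add_zero]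
          rw [he]
          exact mul_ne_zero hcz z.im_pos.ne'
        rw [div_eq_div_iff h1 h2]
        have huu : ((u ^ n : ℝ) : ℂ) * ((u⁻¹ ^ n : ℝ) : ℂ) = 1 := by
          push_cast
          rw [← mul_pow, mul_inv_cancel₀ (Complex.ofReal_ne_zero.mpr hu0.ne'), one_pow]
        linear_combination ((a : ℂ) * d - (b : ℂ) * c) * (z : ℂ) * huu
      have hlim : Tendsto (fun n : ℕ => ((h • (dm (n * t) • z) : ℍ) : ℂ)) atTop
          (𝓝 ((a / c : ℝ) : ℂ)) := by
        have hnum : Tendsto (fun n : ℕ => (a : ℂ) * z + (b : ℂ) * ((u⁻¹ ^ n : ℝ) : ℂ)) atTop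
            (𝓝 ((a : ℂ) * z)) := by
          have h2 := (hvz.const_mul (b : ℂ)).const_add ((a : ℂ) * z)
          simpa using h2
        have hden : Tendsto (fun n : ℕ => (c : ℂ) * z + (d : ℂ) * ((u⁻¹ ^ n : ℝ) : ℂ)) atTop
            (𝓝 ((c : ℂ) * z)) := by
          have h2 := (hvz.const_mul (d : ℂ)).const_add ((c : ℂ) * z)
          simpa using h2
        have hczz : (c : ℂ) * z ≠ 0 :=
          mul_ne_zero (Complex.ofReal_ne_zero.mpr hcz) z.ne_zero
        have hq := hnum.div hden hczz
        apply Tendsto.congr (fun n => (hrew n).symm)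
        have he : (a : ℂ) * z / ((c : ℂ) * z) = ((a / c : ℝ) : ℂ) := by
          push_cast
          rw [mul_div_mul_right _ _ z.ne_zero]
        rwa [he] at hq
      exact Tendsto.congr (fun n => by rw [hpt n])
        (buse_atBot_of_tendsto_real (a / c) y _ hlim ξ hξ)

/-- **Lemma (base point of a horoball).**  Fix `z₀, z ∈ ℍ × ℍ`, `ξ = (ξ₁, ξ₂) ∈ ∂ℍ × ∂ℍ`,
`g = (g₁, g₂) ∈ G` and `T ∈ ℝ`.  If `a = (a₁, 1) ∈ A` with `a₁ = ±diag (λ, λ⁻¹) ≠ 1`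
(`λ = exp t`, `t ≠ 0`) and the horoball `HB(ξ, T) = {w : β_ξ(w, z₀) > T}` contains
infinitely many of the points `g aⁿ z` (`n > 0`), then `ξ₁ = g₁(a₁⁺)` where `a₁⁺` is the
attractive fixed point of `a₁` (namely `∞` if `λ > 1`, and `0` if `λ < 1`).
Symmetrically for `a = (1, a₂)`. -/
theorem horoball_basepoint (z₀ z : ℍ × ℍ) (ξ : Bdry × Bdry) (g : G2) (T : ℝ) :
    (∀ t : ℝ, t ≠ 0 →
      {n : ℕ | 0 < n ∧
        T < buse2 ξ (hact2 g (hact2 (((pr (dm t), 1) : G2) ^ n) z)) z₀}.Infinite →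
      ξ.1 = mob g.1 (if 0 < t then ∞ else ((0 : ℝ) : Bdry))) ∧
    (∀ t : ℝ, t ≠ 0 →
      {n : ℕ | 0 < n ∧
        T < buse2 ξ (hact2 g (hact2 (((1, pr (dm t)) : G2) ^ n) z)) z₀}.Infinite →
      ξ.2 = mob g.2 (if 0 < t then ∞ else ((0 : ℝ) : Bdry))) := by
  constructor
  · intro t ht hinf
    by_contra hne
    have hdec : ∀ n : ℕ, buse2 ξ (hact2 g (hact2 (((pr (dm t), 1) : G2) ^ n) z)) z₀
        = buse ξ.1 (hact g.1 (hact (pr (dm t) ^ n) z.1)) z₀.1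
          + buse ξ.2 (hact g.2 z.2) z₀.2 := by
      intro n
      have hp : (((pr (dm t), 1) : G2) ^ n) = (((pr (dm t)) ^ n : PSL2), (1 : PSL2)) := by
        rw [Prod.pow_mk, one_pow]
      rw [hp]
      simp [buse2, hact2, hact_one]
    have hkey := key g.1 z.1 z₀.1 t ht ξ.1 hne
    have htend := tendsto_atBot_add_const_right atTop
      (buse ξ.2 (hact g.2 z.2) z₀.2) hkey
    obtain ⟨N, hN⟩ := Filter.eventually_atTop.mp (htend.eventually_lt_atBot T)
    apply hinf
    apply Set.Finite.subset (Set.finite_Iio N)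
    rintro n ⟨-, hn2⟩
    show n ∈ Set.Iio N
    rw [Set.mem_Iio]
    by_contra hcn
    push_neg at hcn
    rw [hdec n] at hn2
    exact absurd hn2 (not_lt.mpr (hN n hcn).le)
  · intro t ht hinf
    by_contra hne
    have hdec : ∀ n : ℕ, buse2 ξ (hact2 g (hact2 (((1, pr (dm t)) : G2) ^ n) z)) z₀
        = buse ξ.2 (hact g.2 (hact (pr (dm t) ^ n) z.2)) z₀.2
          + buse ξ.1 (hact g.1 z.1) z₀.1 := by
      intro n
      have hp : (((1, pr (dm t)) : G2) ^ n) = ((1 : PSL2), ((pr (dm t)) ^ n : PSL2)) := by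
        rw [Prod.pow_mk, one_pow]
      rw [hp]
      simp [buse2, hact2, hact_one]
      ring
    have hkey := key g.2 z.2 z₀.2 t ht ξ.2 hne
    have htend := tendsto_atBot_add_const_right atTop
      (buse ξ.1 (hact g.1 z.1) z₀.1) hkey
    obtain ⟨N, hN⟩ := Filter.eventually_atTop.mp (htend.eventually_lt_atBot T)
    apply hinf
    apply Set.Finite.subset (Set.finite_Iio N)
    rintro n ⟨-, hn2⟩
    show n ∈ Set.Iio N
    rw [Set.mem_Iio]
    by_contra hcn
    push_neg at hcn
    rw [hdec n] at hn2
    exact absurd hn2 (not_lt.mpr (hN n hcn).le)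
end
end

section
/- Let Γ be an irreducible lattice of G = PSL(2,ℝ) × PSL(2,ℝ), let g ∈ G and let x = Γg ∈ Γ\G. If the subgroup g⁻¹Γg ∩ A is nontrivial, then the map Ψ_x : (g⁻¹Γg ∩ A)\A → Γ\G, sending the coset (g⁻¹Γg ∩ A)a to Γga, is proper (preimages of compact sets are compact); in particular the orbit xA is closed in Γ\G. -/
noncomputable section

open Matrix MatrixGroups MeasureTheory Filter Topology OnePoint
open scoped UpperHalfPlane

/-- The subgroup `g⁻¹ Γ g ∩ A` of `G`. -/
def Lam (Γ : Subgroup G2) (g : G2) : Subgroup G2 :=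
  Subgroup.map (MulAut.conj g⁻¹).toMonoidHom Γ ⊓ Adiag

/-- The quotient `(g⁻¹ Γ g ∩ A) \ A`, with the quotient topology. -/
abbrev DQ (Γ : Subgroup G2) (g : G2) : Type :=
  Quotient (QuotientGroup.rightRel ((Lam Γ g).subgroupOf Adiag))

/-- The natural map `Ψ_x : (g⁻¹ Γ g ∩ A) \ A → Γ \ G`, `(g⁻¹ Γ g ∩ A) a ↦ Γ g a`;
it is continuous and injective, with image the orbit `x A` of `x = Γ g`. -/
def Psi (Γ : Subgroup G2) (g : G2) : DQ Γ g → RQ Γ :=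
  Quotient.lift (fun a : Adiag => rmk Γ (g * (a : G2))) (by
    intro a b hab
    have hmem : ((b * a⁻¹ : Adiag) : G2) ∈ Lam Γ g :=
      (Subgroup.mem_subgroupOf).mp (QuotientGroup.rightRel_apply.mp hab)
    obtain ⟨γ, hγΓ, hγ⟩ := hmem.1
    refine Quotient.sound (QuotientGroup.rightRel_apply.mpr ?_)
    have hco : ((b * a⁻¹ : Adiag) : G2) = (b : G2) * (a : G2)⁻¹ := rfl
    have key : (g * (b : G2)) * (g * (a : G2))⁻¹ = γ := by
      have hγ' : g⁻¹ * γ * g = (b : G2) * (a : G2)⁻¹ := by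
        simpa [MulAut.conj_apply, hco] using hγ
      have : (g * (b : G2)) * (g * (a : G2))⁻¹ = g * ((b : G2) * (a : G2)⁻¹) * g⁻¹ := by
        group
      rw [this, ← hγ']
      group
    rw [key]
    exact hγΓ)


set_option linter.unusedSectionVars false

section TopFacts
-- Part A : topology on SL2

lemma sl2_inducing : IsInducing (fun g : SL2 => (g : Matrix (Fin 2) (Fin 2) ℝ)) := ⟨rfl⟩

lemma sl2_embedding : IsEmbedding (fun g : SL2 => (g : Matrix (Fin 2) (Fin 2) ℝ)) :=
  ⟨sl2_inducing, fun _ _ h => Subtype.ext h⟩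

lemma sl2_closedEmbedding :
    IsClosedEmbedding (fun g : SL2 => (g : Matrix (Fin 2) (Fin 2) ℝ)) := by
  refine ⟨sl2_embedding, ?_⟩
  have : Set.range (fun g : SL2 => (g : Matrix (Fin 2) (Fin 2) ℝ))
      = {A : Matrix (Fin 2) (Fin 2) ℝ | A.det = 1} := by
    ext A
    constructor
    · rintro ⟨g, rfl⟩; exact g.2
    · intro hA; exact ⟨⟨A, hA⟩, rfl⟩
  rw [this]
  exact isClosed_eq (continuous_id.matrix_det) continuous_const

lemma continuous_sl2_coe : Continuous (fun g : SL2 => (g : Matrix (Fin 2) (Fin 2) ℝ)) :=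
  sl2_inducing.continuous

instance : IsTopologicalGroup SL2 where
  continuous_mul := by
    apply sl2_inducing.continuous_iff.2
    show Continuous (fun p : SL2 × SL2 => ((p.1 * p.2 : SL2) : Matrix (Fin 2) (Fin 2) ℝ))
    have : (fun p : SL2 × SL2 => ((p.1 * p.2 : SL2) : Matrix (Fin 2) (Fin 2) ℝ))
        = fun p : SL2 × SL2 => ((p.1 : Matrix (Fin 2) (Fin 2) ℝ) * (p.2 : Matrix (Fin 2) (Fin 2) ℝ)) := by
      ext p i j; simp
    rw [this]
    exact (continuous_sl2_coe.comp continuous_fst).matrix_mul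
      (continuous_sl2_coe.comp continuous_snd)
  continuous_inv := by
    apply sl2_inducing.continuous_iff.2
    show Continuous (fun g : SL2 => ((g⁻¹ : SL2) : Matrix (Fin 2) (Fin 2) ℝ))
    have : (fun g : SL2 => ((g⁻¹ : SL2) : Matrix (Fin 2) (Fin 2) ℝ))
        = fun g : SL2 => ((g : Matrix (Fin 2) (Fin 2) ℝ)).adjugate := by
      ext g i j; rw [Matrix.SpecialLinearGroup.coe_inv]
    rw [this]
    exact continuous_sl2_coe.matrix_adjugate

instance : T2Space SL2 := sl2_embedding.t2Space
instance : LocallyCompactSpace (Matrix (Fin 2) (Fin 2) ℝ) := Pi.locallyCompactSpace_of_finite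
instance : LocallyCompactSpace SL2 := sl2_closedEmbedding.locallyCompactSpace


lemma center_isClosed : IsClosed ((Subgroup.center SL2 : Subgroup SL2) : Set SL2) := by
  have h : ((Subgroup.center SL2 : Subgroup SL2) : Set SL2)
      = ⋂ h : SL2, {g : SL2 | g * h = h * g} := by
    ext a
    simp only [Set.mem_iInter, Set.mem_setOf_eq, SetLike.mem_coe, Subgroup.mem_center_iff]
    exact ⟨fun H h => (H h).symm, fun H h => (H h).symm⟩
  rw [h]
  exact isClosed_iInter fun h =>
    isClosed_eq (continuous_id.mul continuous_const) (continuous_const.mul continuous_id)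

instance : T2Space PSL2 := by
  haveI : IsClosed ((Subgroup.center SL2 : Subgroup SL2) : Set SL2) := center_isClosed
  infer_instance

end TopFacts


section RightQuot
variable {H : Type*} [Group H] [TopologicalSpace H] [IsTopologicalGroup H] (S : Subgroup H)

def rqmk : H → Quotient (QuotientGroup.rightRel S) := Quotient.mk _

lemma rqmk_eq_iff {x y : H} : rqmk S x = rqmk S y ↔ y * x⁻¹ ∈ S := by
  unfold rqmk
  rw [Quotient.eq]
  exact QuotientGroup.rightRel_apply

lemma continuous_rqmk : Continuous (rqmk S) := continuous_quot_mk

lemma rqmk_surjective : Function.Surjective (rqmk S) := Quotient.exists_rep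

lemma isOpenMap_rqmk : IsOpenMap (rqmk S) := by
  intro U hU
  apply (isQuotientMap_quot_mk).isOpen_preimage.1
  have : Quot.mk _ ⁻¹' (rqmk S '' U) = ⋃ s : S, (fun x => (s : H) * x) '' U := by
    ext x
    simp only [Set.mem_preimage, Set.mem_image, Set.mem_iUnion]
    constructor
    · rintro ⟨u, hu, h⟩
      have hx : x * u⁻¹ ∈ S := (rqmk_eq_iff S).1 (show rqmk S u = rqmk S x from h)
      exact ⟨⟨x * u⁻¹, hx⟩, u, hu, by group⟩
    · rintro ⟨s, u, hu, rfl⟩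
      refine ⟨u, hu, ?_⟩
      show rqmk S u = rqmk S ((s : H) * u)
      exact ((rqmk_eq_iff S).2 (by simp [s.2] : (s : H) * u * u⁻¹ ∈ S))
  have h2 : IsOpen (⋃ s : S, (fun x => (s : H) * x) '' U) :=
    isOpen_iUnion fun s : S => (Homeomorph.mulLeft (s : H)).isOpenMap U hU
  rw [← this] at h2
  exact h2

lemma t2_rq (hS : IsClosed (S : Set H)) : T2Space (Quotient (QuotientGroup.rightRel S)) := by
  rw [t2_iff_isClosed_diagonal, ← isOpen_compl_iff]
  have himg : (Set.diagonal (Quotient (QuotientGroup.rightRel S)))ᶜ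
      = (Prod.map (rqmk S) (rqmk S)) '' {p : H × H | p.2 * p.1⁻¹ ∈ S}ᶜ := by
    ext ⟨u, v⟩
    simp only [Set.mem_compl_iff, Set.mem_diagonal_iff, Set.mem_image, Prod.map, Prod.mk.injEq,
      Set.mem_setOf_eq, Prod.exists]
    constructor
    · intro huv
      obtain ⟨a, rfl⟩ := rqmk_surjective S u
      obtain ⟨b, rfl⟩ := rqmk_surjective S v
      exact ⟨a, b, fun h => huv ((rqmk_eq_iff S).2 h), rfl, rfl⟩
    · rintro ⟨a, b, hab, rfl, rfl⟩
      intro he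
      exact hab ((rqmk_eq_iff S).1 he)
  rw [himg]
  refine ((isOpenMap_rqmk S).prodMap (isOpenMap_rqmk S)) _ ?_
  rw [isOpen_compl_iff]
  exact hS.preimage (continuous_snd.mul continuous_fst.inv)

lemma exists_compact_lift [LocallyCompactSpace H] {K : Set (Quotient (QuotientGroup.rightRel S))}
    (hK : IsCompact K) : ∃ L : Set H, IsCompact L ∧ K ⊆ rqmk S '' L := by
  choose x hx using fun k : K => rqmk_surjective S (k : Quotient (QuotientGroup.rightRel S))
  choose V hVc hVn using fun k : K => exists_compact_mem_nhds (x k)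
  have hcov : K ⊆ ⋃ k : K, rqmk S '' interior (V k) := by
    intro y hy
    exact Set.mem_iUnion.2 ⟨⟨y, hy⟩, x ⟨y, hy⟩, mem_interior_iff_mem_nhds.2 (hVn _), hx _⟩
  obtain ⟨t, ht⟩ := hK.elim_finite_subcover (fun k : K => rqmk S '' interior (V k))
    (fun k => isOpenMap_rqmk S _ isOpen_interior) hcov
  refine ⟨⋃ k ∈ t, V k, t.finite_toSet.isCompact_biUnion (fun k _ => hVc k), ?_⟩
  intro y hy
  obtain ⟨k, hk, z, hz, hzy⟩ := by simpa only [Set.mem_iUnion, Set.mem_image] using ht hy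
  exact ⟨z, Set.mem_biUnion hk (interior_subset hz), hzy⟩

end RightQuot

-- ===================== Part C: algebra in SL2 / PSL2 =====================

/-- The negative identity in SL2. -/
def negSL : SL2 := ⟨-1, by simp [Matrix.det_neg]⟩

lemma negSL_mem_center : negSL ∈ Subgroup.center SL2 := by
  rw [Matrix.SpecialLinearGroup.mem_center_iff]
  refine ⟨-1, by norm_num, ?_⟩
  simp only [map_neg, _root_.map_one]
  rfl

lemma negSL_mul_negSL : negSL * negSL = 1 := by
  apply Subtype.ext
  show (-1 : Matrix (Fin 2) (Fin 2) ℝ) * (-1) = 1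
  simp

lemma mem_center_sl2 {A : SL2} : A ∈ Subgroup.center SL2 ↔ A = 1 ∨ A = negSL := by
  constructor
  · intro h
    obtain ⟨r, hr, hA⟩ := Matrix.SpecialLinearGroup.mem_center_iff.1 h
    have hr2 : r ^ 2 = 1 := by simpa using hr
    have : r = 1 ∨ r = -1 := by
      rcases mul_eq_zero.1 (show (r - 1) * (r + 1) = 0 by nlinarith) with h' | h'
      · left; linarith
      · right; linarith
    rcases this with rfl | rfl
    · left
      apply Subtype.ext
      rw [← hA]
      simp
    · right
      apply Subtype.ext
      rw [← hA]
      show (Matrix.scalar (Fin 2)) (-1) = (-1 : Matrix (Fin 2) (Fin 2) ℝ)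
      ext i j
      fin_cases i <;> fin_cases j <;> simp [Matrix.scalar, Matrix.diagonal]
  · rintro (rfl | rfl)
    · exact Subgroup.one_mem _
    · exact negSL_mem_center

lemma pr_eq_iff {X Y : SL2} : pr X = pr Y ↔ X = Y ∨ X = negSL * Y := by
  rw [pr, QuotientGroup.mk'_eq_mk']
  constructor
  · rintro ⟨z, hz, rfl⟩
    rcases mem_center_sl2.1 hz with rfl | rfl
    · left; simp
    · right
      rw [Subgroup.mem_center_iff.1 negSL_mem_center X, ← mul_assoc, negSL_mul_negSL, one_mul]
  · rintro (rfl | rfl)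
    · exact ⟨1, Subgroup.one_mem _, mul_one X⟩
    · refine ⟨negSL, negSL_mem_center, ?_⟩
      rw [mul_assoc, Subgroup.mem_center_iff.1 negSL_mem_center Y, ← mul_assoc,
        negSL_mul_negSL, one_mul]

lemma pr_surjective : Function.Surjective pr := QuotientGroup.mk'_surjective _

lemma dm_val (t : ℝ) :
    (dm t : Matrix (Fin 2) (Fin 2) ℝ) = !![Real.exp t, 0; 0, Real.exp (-t)] := rfl

lemma pr_dm_eq_one_iff {t : ℝ} : pr (dm t) = 1 ↔ t = 0 := by
  constructor
  · intro h
    have h' : pr (dm t) = pr 1 := by simpa using h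
    rcases pr_eq_iff.1 h' with h'' | h''
    · have h0 := congrFun (congrFun (congrArg Subtype.val h'') 0) 0
      have h1 : Real.exp t = 1 := by
        simpa [dm_val, Matrix.one_fin_two] using h0
      exact (Real.exp_eq_one_iff t).1 h1
    · have h0 := congrFun (congrFun (congrArg Subtype.val h'') 0) 0
      have h1 : Real.exp t = -1 := by
        rw [mul_one] at h0; simpa [dm_val, negSL, Matrix.one_fin_two] using h0
      nlinarith [Real.exp_pos t]
  · rintro rfl
    rw [dm_zero, _root_.map_one]

lemma sl2_commute_dm {X : SL2} {t : ℝ} (ht : t ≠ 0) (h : X * dm t = dm t * X) :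
    ∃ s, X = dm s ∨ X = negSL * dm s := by
  set a := (X : Matrix (Fin 2) (Fin 2) ℝ) 0 0 with ha
  set b := (X : Matrix (Fin 2) (Fin 2) ℝ) 0 1 with hb
  set c := (X : Matrix (Fin 2) (Fin 2) ℝ) 1 0 with hc
  set d := (X : Matrix (Fin 2) (Fin 2) ℝ) 1 1 with hd
  have hX : (X : Matrix (Fin 2) (Fin 2) ℝ) = !![a, b; c, d] := Matrix.eta_fin_two _
  have hm : (X : Matrix (Fin 2) (Fin 2) ℝ) * (dm t : Matrix (Fin 2) (Fin 2) ℝ)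
      = (dm t : Matrix (Fin 2) (Fin 2) ℝ) * (X : Matrix (Fin 2) (Fin 2) ℝ) := by
    have := congrArg Subtype.val h
    simpa using this
  rw [hX, dm_val, Matrix.mul_fin_two, Matrix.mul_fin_two] at hm
  have e01 : b * Real.exp (-t) = Real.exp t * b := by
    have := congrFun (congrFun hm 0) 1
    simpa using this
  have e10 : c * Real.exp t = Real.exp (-t) * c := by
    have := congrFun (congrFun hm 1) 0
    simpa using this
  have hexp : Real.exp (-t) ≠ Real.exp t := fun hh => ht (by
    have := Real.exp_injective hh
    linarith)
  have hb0 : b = 0 := by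
    rcases mul_eq_zero.1 (show b * (Real.exp (-t) - Real.exp t) = 0 by linear_combination e01) with h' | h'
    · exact h'
    · exact absurd (by linarith : Real.exp (-t) = Real.exp t) hexp
  have hc0 : c = 0 := by
    rcases mul_eq_zero.1 (show c * (Real.exp t - Real.exp (-t)) = 0 by linear_combination e10) with h' | h'
    · exact h'
    · exact absurd (by linarith : Real.exp (-t) = Real.exp t) hexp
  have hdet : a * d - b * c = 1 := by
    have := X.2
    rwa [Matrix.det_fin_two] at this
  have had : a * d = 1 := by rw [hb0, hc0] at hdet; linarith
  have ha0 : a ≠ 0 := by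
    intro h0
    rw [h0, zero_mul] at had
    norm_num at had
  rcases lt_or_gt_of_ne ha0 with haneg | hapos
  · refine ⟨Real.log (-a), Or.inr ?_⟩
    apply Subtype.ext
    show (X : Matrix (Fin 2) (Fin 2) ℝ) = (-1 : Matrix (Fin 2) (Fin 2) ℝ) * _
    rw [hX, dm_val, hb0, hc0]
    have hea : Real.exp (Real.log (-a)) = -a := Real.exp_log (by linarith)
    have hinv : a⁻¹ = d := inv_eq_of_mul_eq_one_right had
    have hed : Real.exp (-Real.log (-a)) = -d := by
      rw [Real.exp_neg, hea, inv_neg, hinv]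
    rw [hea, hed]
    ext i j
    fin_cases i <;> fin_cases j <;> simp
  · refine ⟨Real.log a, Or.inl ?_⟩
    apply Subtype.ext
    rw [hX, dm_val, hb0, hc0]
    have hea : Real.exp (Real.log a) = a := Real.exp_log hapos
    have hinv : a⁻¹ = d := inv_eq_of_mul_eq_one_right had
    have hed : Real.exp (-Real.log a) = d := by
      rw [Real.exp_neg, hea, hinv]
    rw [hea, hed]

lemma sl2_anticommute_dm {X : SL2} {t : ℝ} (h : X * dm t = negSL * (dm t * X)) : False := by
  set a := (X : Matrix (Fin 2) (Fin 2) ℝ) 0 0 with ha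
  set b := (X : Matrix (Fin 2) (Fin 2) ℝ) 0 1 with hb
  set c := (X : Matrix (Fin 2) (Fin 2) ℝ) 1 0 with hc
  set d := (X : Matrix (Fin 2) (Fin 2) ℝ) 1 1 with hd
  have hX : (X : Matrix (Fin 2) (Fin 2) ℝ) = !![a, b; c, d] := Matrix.eta_fin_two _
  have hm : (X : Matrix (Fin 2) (Fin 2) ℝ) * (dm t : Matrix (Fin 2) (Fin 2) ℝ)
      = (-1 : Matrix (Fin 2) (Fin 2) ℝ)
        * ((dm t : Matrix (Fin 2) (Fin 2) ℝ) * (X : Matrix (Fin 2) (Fin 2) ℝ)) := by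
    have := congrArg Subtype.val h
    simp only [Matrix.SpecialLinearGroup.coe_mul] at this
    simpa [negSL, mul_assoc] using this
  rw [neg_one_mul, hX, dm_val, Matrix.mul_fin_two, Matrix.mul_fin_two] at hm
  have e00 : a * Real.exp t = -(Real.exp t * a) := by
    have := congrFun (congrFun hm 0) 0
    simpa using this
  have e11 : d * Real.exp (-t) = -(Real.exp (-t) * d) := by
    have := congrFun (congrFun hm 1) 1
    simpa using this
  have e01 : b * Real.exp (-t) = -(Real.exp t * b) := by
    have := congrFun (congrFun hm 0) 1
    simpa using this
  have e10 : c * Real.exp t = -(Real.exp (-t) * c) := by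
    have := congrFun (congrFun hm 1) 0
    simpa using this
  have hep := Real.exp_pos t
  have hep' := Real.exp_pos (-t)
  have ha0 : a = 0 := by nlinarith [e00]
  have hd0 : d = 0 := by nlinarith [e11]
  have hb0 : b = 0 := by nlinarith [e01, sq_nonneg b]
  have hc0 : c = 0 := by nlinarith [e10, sq_nonneg c]
  have hdet : a * d - b * c = 1 := by
    have := X.2
    rwa [Matrix.det_fin_two] at this
  rw [ha0, hb0, hc0, hd0] at hdet
  norm_num at hdet

/-- Centralizer of a nontrivial diagonal element of PSL2 is the diagonal group. -/
lemma centralizer_pr_dm {x : PSL2} {t : ℝ} (ht : t ≠ 0)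
    (hc : x * pr (dm t) = pr (dm t) * x) : ∃ s, x = pr (dm s) := by
  obtain ⟨X, rfl⟩ := pr_surjective x
  rw [← _root_.map_mul, ← _root_.map_mul] at hc
  rcases pr_eq_iff.1 hc with h | h
  · obtain ⟨s, hs | hs⟩ := sl2_commute_dm ht h
    · exact ⟨s, by rw [hs]⟩
    · refine ⟨s, ?_⟩
      rw [hs]
      rw [show pr (negSL * dm s) = pr negSL * pr (dm s) from _root_.map_mul pr _ _]
      have h1 : pr negSL = 1 := by
        rw [pr]
        simpa using negSL_mem_center
      rw [h1, one_mul]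
  · exact absurd h (fun hh => sl2_anticommute_dm hh)

-- ===================== Part D: Adiag, discreteness =====================

lemma mem_Adiag_iff {x : G2} :
    x ∈ Adiag ↔ (∃ t, x.1 = pr (dm t)) ∧ (∃ s, x.2 = pr (dm s)) := by
  constructor
  · rintro ⟨t, s, rfl⟩
    exact ⟨⟨t, rfl⟩, ⟨s, rfl⟩⟩
  · rintro ⟨⟨t, ht⟩, ⟨s, hs⟩⟩
    exact ⟨t, s, Prod.ext ht hs⟩

lemma adiag_comm {x y : G2} (hx : x ∈ Adiag) (hy : y ∈ Adiag) : x * y = y * x := by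
  obtain ⟨t, s, rfl⟩ := hx
  obtain ⟨t', s', rfl⟩ := hy
  have h1 : ∀ u v : ℝ, pr (dm u) * pr (dm v) = pr (dm v) * pr (dm u) := by
    intro u v
    rw [← _root_.map_mul, ← _root_.map_mul, dm_mul, dm_mul, add_comm]
  exact Prod.ext (h1 t t') (h1 s s')

/-- The set of diagonal classes in PSL2. -/
def Tset : Set PSL2 := {x | ∃ t, x = pr (dm t)}

lemma negSL_mul_val (Y : SL2) :
    ((negSL * Y : SL2) : Matrix (Fin 2) (Fin 2) ℝ) = -(Y : Matrix (Fin 2) (Fin 2) ℝ) := by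
  show ((-1 : Matrix (Fin 2) (Fin 2) ℝ) * _) = _
  simp

lemma Tset_closed : IsClosed Tset := by
  have hq := QuotientGroup.isQuotientMap_mk (Subgroup.center SL2)
  rw [← hq.isClosed_preimage]
  have hpre : QuotientGroup.mk ⁻¹' Tset
      = {X : SL2 | (X : Matrix (Fin 2) (Fin 2) ℝ) 0 1 = 0
          ∧ (X : Matrix (Fin 2) (Fin 2) ℝ) 1 0 = 0} := by
    ext X
    constructor
    · rintro ⟨t, ht⟩
      have ht' : pr X = pr (dm t) := ht
      rcases pr_eq_iff.1 ht' with rfl | h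
      · constructor <;> simp [dm_val]
      · have hv := congrArg Subtype.val h
        rw [negSL_mul_val] at hv
        constructor <;> rw [hv] <;> simp [dm_val]
    · rintro ⟨h01, h10⟩
      have hcomm : X * dm 1 = dm 1 * X := by
        apply Subtype.ext
        have h1 := congrArg Subtype.val (rfl : X * dm 1 = X * dm 1)
        show (X : Matrix (Fin 2) (Fin 2) ℝ) * _ = _ * (X : Matrix (Fin 2) (Fin 2) ℝ)
        rw [Matrix.eta_fin_two (X : Matrix (Fin 2) (Fin 2) ℝ), h01, h10, dm_val,
          Matrix.mul_fin_two, Matrix.mul_fin_two]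
        ring_nf
      obtain ⟨s, hs | hs⟩ := sl2_commute_dm one_ne_zero hcomm
      · exact ⟨s, by rw [hs]; rfl⟩
      · refine ⟨s, ?_⟩
        show pr X = pr (dm s)
        rw [hs, _root_.map_mul]
        have h1 : pr negSL = 1 := by
          rw [pr]
          simpa using negSL_mem_center
        rw [h1, one_mul]
  rw [hpre]
  have hc1 : Continuous (fun X : SL2 => (X : Matrix (Fin 2) (Fin 2) ℝ) 0 1) :=
    ((continuous_apply 1).comp ((continuous_apply 0).comp continuous_sl2_coe))
  have hc2 : Continuous (fun X : SL2 => (X : Matrix (Fin 2) (Fin 2) ℝ) 1 0) :=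
    ((continuous_apply 0).comp ((continuous_apply 1).comp continuous_sl2_coe))
  exact (isClosed_eq hc1 continuous_const).inter (isClosed_eq hc2 continuous_const)

lemma adiag_closed : IsClosed ((Adiag : Subgroup G2) : Set G2) := by
  have h : ((Adiag : Subgroup G2) : Set G2) = Tset ×ˢ Tset := by
    ext x
    simp only [SetLike.mem_coe, mem_Adiag_iff, Set.mem_prod]
    rfl
  rw [h]
  exact Tset_closed.prod Tset_closed

lemma subgroup_closed_of_discrete {H : Type*} [Group H] [TopologicalSpace H]
    [IsTopologicalGroup H] [T2Space H]
    (S : Subgroup H) (hd : DiscreteTopology ((S : Set H) : Type _)) : IsClosed (S : Set H) := by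
  obtain ⟨U, hU, hUS⟩ := nhds_inter_eq_singleton_of_mem_discrete (isDiscrete_iff_discreteTopology.mpr hd)
    (show (1 : H) ∈ (S : Set H) from S.one_mem)
  have hcont : Filter.Tendsto (fun p : H × H => p.1 * p.2⁻¹) (𝓝 (1, 1)) (𝓝 1) := by
    have : Continuous (fun p : H × H => p.1 * p.2⁻¹) := continuous_fst.mul continuous_snd.inv
    have h0 := this.continuousAt (x := ((1 : H), (1 : H)))
    rw [ContinuousAt] at h0
    simpa using h0
  have hUU : (fun p : H × H => p.1 * p.2⁻¹) ⁻¹' U ∈ 𝓝 ((1 : H), (1 : H)) := hcont hU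
  rw [nhds_prod_eq, Filter.mem_prod_iff] at hUU
  obtain ⟨V₁, hV₁, V₂, hV₂, hV⟩ := hUU
  set V : Set H := V₁ ∩ V₂ with hVdef
  have hVmem : V ∈ 𝓝 (1 : H) := Filter.inter_mem hV₁ hV₂
  have hVU : ∀ x ∈ V, ∀ y ∈ V, x * y⁻¹ ∈ U := fun x hx y hy =>
    hV (Set.mk_mem_prod hx.1 hy.2)
  rw [← closure_subset_iff_isClosed]
  intro x hx
  have hW : (fun h => h * x) '' V ∈ 𝓝 x := by
    have := (Homeomorph.mulRight x).isOpenMap.image_mem_nhds (x := (1 : H)) hVmem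
    simpa using this
  obtain ⟨s₀, hs₀W, hs₀S⟩ := mem_closure_iff_nhds.1 hx _ hW
  by_cases hxs : x = s₀
  · rwa [hxs]
  exfalso
  have hW' : ((fun h => h * x) '' V) ∩ {s₀}ᶜ ∈ 𝓝 x := by
    refine Filter.inter_mem hW ?_
    exact (isOpen_compl_singleton).mem_nhds (by simpa using hxs)
  obtain ⟨s₁, ⟨hs₁W, hs₁ne⟩, hs₁S⟩ := mem_closure_iff_nhds.1 hx _ hW'
  obtain ⟨v₀, hv₀, rfl⟩ := hs₀W
  obtain ⟨v₁, hv₁, rfl⟩ := hs₁W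
  have hmem : (v₁ * x) * (v₀ * x)⁻¹ ∈ U := by
    have : (v₁ * x) * (v₀ * x)⁻¹ = v₁ * v₀⁻¹ := by group
    rw [this]
    exact hVU v₁ hv₁ v₀ hv₀
  have hmemS : (v₁ * x) * (v₀ * x)⁻¹ ∈ (S : Set H) := S.mul_mem hs₁S (S.inv_mem hs₀S)
  have : (v₁ * x) * (v₀ * x)⁻¹ = 1 := by
    have := hUS ▸ Set.mem_inter hmem hmemS
    simpa using this
  apply hs₁ne
  have : v₁ * x = v₀ * x := by
    have h2 := mul_eq_one_iff_eq_inv.1 this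
    rw [h2, inv_inv]
  simp [this]

-- ===================== Part E: auxiliary conj lemmas =====================

lemma isQuotientMap_rqmk {H : Type*} [Group H] [TopologicalSpace H] (S : Subgroup H) :
    Topology.IsQuotientMap (rqmk S) := isQuotientMap_quot_mk

lemma discrete_map_conj (g : G2) (S : Subgroup G2)
    (hd : DiscreteTopology ((S : Set G2) : Type _)) :
    DiscreteTopology
      ((((Subgroup.map (MulAut.conj g⁻¹).toMonoidHom S) : Subgroup G2) : Set G2) : Type _) := by
  let e : G2 ≃ₜ G2 := (Homeomorph.mulLeft g⁻¹).trans (Homeomorph.mulRight g)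
  have hcar : ((Subgroup.map (MulAut.conj g⁻¹).toMonoidHom S : Subgroup G2) : Set G2)
      = e '' (S : Set G2) := by
    rw [Subgroup.coe_map]
    congr 1
    funext x
    show g⁻¹ * x * g⁻¹⁻¹ = g⁻¹ * x * g
    rw [inv_inv]
  rw [hcar]
  haveI := hd
  exact (Homeomorph.image e (S : Set G2)).symm.isEmbedding.discreteTopology


set_option maxHeartbeats 2000000 in
/-- **Lemma.**  For an irreducible lattice `Γ` of `G = PSL(2, ℝ) × PSL(2, ℝ)` and `g ∈ G`,
if the subgroup `g⁻¹ Γ g ∩ A` is nontrivial then the map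
`Ψ_x : (g⁻¹ Γ g ∩ A) \ A → Γ \ G` is proper; in particular the orbit `x A` of `x = Γ g`
is closed in `Γ \ G`. -/
theorem psi_proper_of_Lam_nontrivial
    (Γ : Subgroup G2) (hΓ : IsIrreducibleLattice Γ) (g : G2)
    (hnt : Lam Γ g ≠ ⊥) :
    (∀ K : Set (RQ Γ), IsCompact K → IsCompact (Psi Γ g ⁻¹' K)) ∧
      IsClosed (orbA Γ g) := by
  classical
  -- discreteness & closedness of Γ
  have hΓdisc : DiscreteTopology ((Γ : Set G2) : Type _) := hΓ.discrete
  have hΓclosed : IsClosed (Γ : Set G2) := subgroup_closed_of_discrete Γ hΓdisc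
  haveI hT2 : T2Space (RQ Γ) := t2_rq Γ hΓclosed
  -- the conjugate subgroup Δ = g⁻¹ Γ g
  set Δ : Subgroup G2 := Subgroup.map (MulAut.conj g⁻¹).toMonoidHom Γ with hΔdef
  have hΔdisc : DiscreteTopology ((Δ : Set G2) : Type _) := discrete_map_conj g Γ hΓdisc
  have hΔclosed : IsClosed (Δ : Set G2) := subgroup_closed_of_discrete Δ hΔdisc
  -- pick a nontrivial element of Λ = g⁻¹Γg ∩ A
  obtain ⟨lam0, hlamMem, hlamne⟩ : ∃ lam0 : G2, lam0 ∈ Lam Γ g ∧ lam0 ≠ 1 := by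
    by_contra hcon
    push_neg at hcon
    exact hnt (Subgroup.ext fun x => ⟨fun hx => hcon x hx, by rintro rfl; exact (Lam Γ g).one_mem⟩)
  have hlamΔ : lam0 ∈ Δ := hlamMem.1
  have hlamA : lam0 ∈ Adiag := hlamMem.2
  obtain ⟨t₀, s₀, hlam_eq⟩ := hlamA
  -- the diagonal parameters are nonzero
  obtain ⟨γ₀, hγ₀Γ, hγ₀⟩ := hlamΔ
  have hγ₀eq : g⁻¹ * γ₀ * g = lam0 := by
    rw [← hγ₀]
    simp [MulAut.conj_apply, mul_assoc]
  have ht₀ : t₀ ≠ 0 := by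
    rintro rfl
    have h1 : lam0.1 = 1 := by rw [hlam_eq]; exact pr_dm_eq_one_iff.2 rfl
    have hγ1 : γ₀.1 = 1 := by
      have : γ₀ = g * lam0 * g⁻¹ := by rw [← hγ₀eq]; group
      rw [this]
      show g.1 * lam0.1 * g.1⁻¹ = 1
      rw [h1, mul_one, mul_inv_cancel]
    have := hΓ.ker_fst γ₀ hγ₀Γ hγ1
    apply hlamne
    rw [← hγ₀eq, this]
    group
  have hs₀ : s₀ ≠ 0 := by
    rintro rfl
    have h1 : lam0.2 = 1 := by rw [hlam_eq]; exact pr_dm_eq_one_iff.2 rfl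
    have hγ1 : γ₀.2 = 1 := by
      have : γ₀ = g * lam0 * g⁻¹ := by rw [← hγ₀eq]; group
      rw [this]
      show g.2 * lam0.2 * g.2⁻¹ = 1
      rw [h1, mul_one, mul_inv_cancel]
    have := hΓ.ker_snd γ₀ hγ₀Γ hγ1
    apply hlamne
    rw [← hγ₀eq, this]
    group
  -- centralizer of lam0 is Adiag
  have hcomm_to_Adiag : ∀ x : G2, x * lam0 = lam0 * x → x ∈ Adiag := by
    intro x hx
    rw [hlam_eq] at hx
    have h1 : x.1 * pr (dm t₀) = pr (dm t₀) * x.1 := congrArg Prod.fst hx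
    have h2 : x.2 * pr (dm s₀) = pr (dm s₀) * x.2 := congrArg Prod.snd hx
    obtain ⟨t, ht⟩ := centralizer_pr_dm ht₀ h1
    obtain ⟨s, hs⟩ := centralizer_pr_dm hs₀ h2
    exact ⟨t, s, Prod.ext ht hs⟩
  -- ===== key covering lemma =====
  have key : ∀ L : Set G2, IsCompact L → ∃ C : Set (Adiag : Subgroup G2), IsCompact C ∧
      ∀ a : (Adiag : Subgroup G2), (∃ γ ∈ Γ, γ * (g * (a : G2)) ∈ L) →
        ∃ c ∈ C, rqmk ((Lam Γ g).subgroupOf Adiag) a = rqmk ((Lam Γ g).subgroupOf Adiag) c := by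
    intro L hL
    set L' : Set G2 := (fun x => g⁻¹ * x) '' L with hL'def
    have hL'c : IsCompact L' := hL.image (continuous_const.mul continuous_id)
    set K0 : Set G2 := (fun p => p * lam0 * p⁻¹) '' L' with hK0def
    have hK0c : IsCompact K0 :=
      hL'c.image (((continuous_id.mul continuous_const).mul continuous_inv))
    have hF : (K0 ∩ (Δ : Set G2)).Finite :=
      (hK0c.inter_right hΔclosed).finite
        (isDiscrete_iff_discreteTopology.mpr (DiscreteTopology.of_subset hΔdisc Set.inter_subset_right))
    set P : G2 → G2 → Prop :=
      fun μ δ => δ ∈ Δ ∧ (∃ a0 : (Adiag : Subgroup G2), δ * (a0 : G2) ∈ L')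
        ∧ δ * lam0 * δ⁻¹ = μ with hPdef
    set f : G2 → G2 := fun μ => if h : ∃ δ, P μ δ then h.choose else 1 with hfdef
    set C : Set (Adiag : Subgroup G2) :=
      ⋃ μ ∈ K0 ∩ (Δ : Set G2), (Subtype.val ⁻¹' ((fun x => (f μ)⁻¹ * x) '' L')) with hCdef
    have hvalemb : Topology.IsClosedEmbedding (Subtype.val : {x : G2 // x ∈ Adiag} → G2) :=
      Topology.IsClosedEmbedding.subtypeVal adiag_closed
    have hCc : IsCompact C := by
      apply hF.isCompact_biUnion
      intro μ _
      exact hvalemb.isCompact_preimage (hL'c.image (continuous_const.mul continuous_id))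
    refine ⟨C, hCc, ?_⟩
    rintro a ⟨γ, hγ, hγL⟩
    set δ : G2 := g⁻¹ * γ * g with hδdef
    have hδΔ : δ ∈ Δ := ⟨γ, hγ, by simp [MulAut.conj_apply, hδdef, mul_assoc]⟩
    have hδa : δ * (a : G2) ∈ L' := by
      refine ⟨γ * (g * (a : G2)), hγL, ?_⟩
      show g⁻¹ * (γ * (g * (a : G2))) = δ * (a : G2)
      rw [hδdef]; group
    set μ : G2 := δ * lam0 * δ⁻¹ with hμdef
    have hμK0 : μ ∈ K0 := by
      refine ⟨δ * (a : G2), hδa, ?_⟩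
      show (δ * (a : G2)) * lam0 * (δ * (a : G2))⁻¹ = μ
      have hcommA : (a : G2) * lam0 = lam0 * (a : G2) := adiag_comm a.2 hlamMem.2
      rw [hμdef]
      calc (δ * (a : G2)) * lam0 * (δ * (a : G2))⁻¹
          = δ * ((a : G2) * lam0) * ((a : G2)⁻¹ * δ⁻¹) := by group
        _ = δ * (lam0 * (a : G2)) * ((a : G2)⁻¹ * δ⁻¹) := by rw [hcommA]
        _ = δ * lam0 * δ⁻¹ := by group
    have hμΔ : μ ∈ Δ := Δ.mul_mem (Δ.mul_mem hδΔ hlamMem.1) (Δ.inv_mem hδΔ)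
    have hex : ∃ δ', P μ δ' := ⟨δ, hδΔ, ⟨a, hδa⟩, rfl⟩
    have hfP : P μ (f μ) := by
      rw [hfdef]
      simp only [dif_pos hex]
      exact hex.choose_spec
    obtain ⟨hfΔ, ⟨a0, hfa0⟩, hfμ⟩ := hfP
    have hcomm : ((f μ)⁻¹ * δ) * lam0 = lam0 * ((f μ)⁻¹ * δ) := by
      have h2 : f μ * lam0 * (f μ)⁻¹ = δ * lam0 * δ⁻¹ := hfμ.trans hμdef
      have h3 : lam0 * ((f μ)⁻¹ * δ) = (f μ)⁻¹ * (f μ * lam0 * (f μ)⁻¹) * δ := by group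
      rw [h3, h2]
      group
    have hmemA : (f μ)⁻¹ * δ ∈ Adiag := hcomm_to_Adiag _ hcomm
    have hmemΔ : (f μ)⁻¹ * δ ∈ Δ := Δ.mul_mem (Δ.inv_mem hfΔ) hδΔ
    have hmemLam : (f μ)⁻¹ * δ ∈ Lam Γ g := ⟨hmemΔ, hmemA⟩
    set lamel : (Adiag : Subgroup G2) := ⟨(f μ)⁻¹ * δ, hmemA⟩ with hlameldef
    refine ⟨lamel * a, ?_, ?_⟩
    · refine Set.mem_iUnion₂.2 ⟨μ, ⟨hμK0, hμΔ⟩, ?_⟩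
      refine ⟨δ * (a : G2), hδa, ?_⟩
      show (f μ)⁻¹ * (δ * (a : G2)) = ((lamel * a : (Adiag : Subgroup G2)) : G2)
      show (f μ)⁻¹ * (δ * (a : G2)) = ((f μ)⁻¹ * δ) * (a : G2)
      group
    · refine ((rqmk_eq_iff ((Lam Γ g).subgroupOf Adiag)).2 ?_)
      have : lamel * a * a⁻¹ = lamel := by group
      rw [this]
      exact Subgroup.mem_subgroupOf.2 hmemLam
  constructor
  -- ===== properness =====
  · intro K hK
    obtain ⟨L, hLc, hKL⟩ := exists_compact_lift Γ hK
    obtain ⟨C, hCc, hCspec⟩ := key L hLc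
    have hPsiCont : Continuous (Psi Γ g) :=
      Continuous.quotient_lift
        ((continuous_rqmk Γ).comp (continuous_const.mul continuous_subtype_val)) _
    have hclosed : IsClosed (Psi Γ g ⁻¹' K) := hK.isClosed.preimage hPsiCont
    have hsub : Psi Γ g ⁻¹' K ⊆ rqmk ((Lam Γ g).subgroupOf Adiag) '' C := by
      intro d hd
      obtain ⟨a, rfl⟩ := Quotient.exists_rep d
      have hd' : rmk Γ (g * (a : G2)) ∈ K := hd
      obtain ⟨l, hlL, hleq⟩ := hKL hd'
      have hγ : l * (g * (a : G2))⁻¹ ∈ Γ := by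
        refine (rqmk_eq_iff Γ).1 ?_
        exact hleq.symm
      have hspec := hCspec a ⟨l * (g * (a : G2))⁻¹, hγ, by
        rw [inv_mul_cancel_right]; exact hlL⟩
      obtain ⟨c, hcC, heq⟩ := hspec
      exact ⟨c, hcC, heq.symm⟩
    exact IsCompact.of_isClosed_subset
      (hCc.image (continuous_rqmk ((Lam Γ g).subgroupOf Adiag))) hclosed hsub
  -- ===== closedness of the orbit =====
  · have hsat : rqmk Γ ⁻¹' (orbA Γ g)
        = {x : G2 | ∃ γ ∈ Γ, ∃ a ∈ Adiag, x = γ * (g * a)} := by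
      ext x
      constructor
      · rintro ⟨a, haA, hx⟩
        have hγ : x * (g * a)⁻¹ ∈ Γ := (rqmk_eq_iff Γ).1 hx.symm
        exact ⟨x * (g * a)⁻¹, hγ, a, haA, by rw [inv_mul_cancel_right]⟩
      · rintro ⟨γ, hγ, a, haA, rfl⟩
        refine ⟨a, haA, ?_⟩
        show rqmk Γ (γ * (g * a)) = rqmk Γ (g * a)
        exact ((rqmk_eq_iff Γ).2 (by rw [mul_inv_cancel_right]; exact hγ)).symm
    have hclosed : IsClosed (rqmk Γ ⁻¹' (orbA Γ g)) := by
      rw [hsat]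
      rw [← closure_subset_iff_isClosed]
      intro x hx
      obtain ⟨Lx, hLxc, hLxn⟩ := exists_compact_mem_nhds x
      obtain ⟨C, hCc, hCspec⟩ := key Lx hLxc
      set Cv : Set G2 := Subtype.val '' C with hCvdef
      have hCvc : IsCompact Cv := hCc.image continuous_subtype_val
      set M : Set G2 := (fun p : G2 × G2 => p.1 * (g * p.2)⁻¹) '' (Lx ×ˢ Cv) with hMdef
      have hMc : IsCompact M := (hLxc.prod hCvc).image
        (continuous_fst.mul ((continuous_const.mul continuous_snd).inv))
      have hTfin : (M ∩ (Γ : Set G2)).Finite :=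
        (hMc.inter_right hΓclosed).finite
          (isDiscrete_iff_discreteTopology.mpr (DiscreteTopology.of_subset hΓdisc Set.inter_subset_right))
      set Z : Set G2 := ⋃ γ ∈ M ∩ (Γ : Set G2), (fun c => γ * (g * c)) '' Cv with hZdef
      have hZc : IsCompact Z := hTfin.isCompact_biUnion
        (fun γ _ => hCvc.image (continuous_const.mul (continuous_const.mul continuous_id)))
      have hZS : Z ⊆ {x : G2 | ∃ γ ∈ Γ, ∃ a ∈ Adiag, x = γ * (g * a)} := by
        intro z hz
        obtain ⟨γ, hγ, h⟩ := Set.mem_iUnion₂.1 hz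
        obtain ⟨c, hcCv, rfl⟩ := h
        obtain ⟨c', hc'C, rfl⟩ := hcCv
        exact ⟨γ, hγ.2, (c' : G2), c'.2, rfl⟩
      have hSsub : {x : G2 | ∃ γ ∈ Γ, ∃ a ∈ Adiag, x = γ * (g * a)} ∩ Lx ⊆ Z := by
        rintro y ⟨⟨γ, hγ, a, haA, rfl⟩, hyL⟩
        obtain ⟨c, hcC, heq⟩ := hCspec ⟨a, haA⟩ ⟨γ, hγ, hyL⟩
        have hlam : (c : G2) * ((⟨a, haA⟩ : (Adiag : Subgroup G2)) : G2)⁻¹ ∈ Lam Γ g := by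
          have h' := (rqmk_eq_iff ((Lam Γ g).subgroupOf Adiag)).1 heq
          have := Subgroup.mem_subgroupOf.1 h'
          exact this
        obtain ⟨γ₁, hγ₁Γ, hconj⟩ := hlam.1
        have e1 : g⁻¹ * γ₁ * g = (c : G2) * a⁻¹ := by
          rw [← hconj]
          simp [MulAut.conj_apply, mul_assoc]
        have e1' : γ₁ = g * ((c : G2) * a⁻¹) * g⁻¹ := by
          rw [← e1]; group
        have hgac : (γ * (g * a)) * (g * (c : G2))⁻¹ = γ * γ₁⁻¹ := by
          rw [e1']; group
        have hγ₂M : γ * γ₁⁻¹ ∈ M := by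
          refine ⟨(γ * (g * a), (c : G2)), ⟨hyL, ⟨c, hcC, rfl⟩⟩, ?_⟩
          exact hgac
        have hγ₂Γ : γ * γ₁⁻¹ ∈ Γ := Γ.mul_mem hγ (Γ.inv_mem hγ₁Γ)
        refine Set.mem_iUnion₂.2 ⟨γ * γ₁⁻¹, ⟨hγ₂M, hγ₂Γ⟩, ?_⟩
        refine ⟨(c : G2), ⟨c, hcC, rfl⟩, ?_⟩
        show (γ * γ₁⁻¹) * (g * (c : G2)) = γ * (g * a)
        rw [← hgac]; group
      have hxZ : x ∈ Z := by
        by_contra hxZ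
        have hnb : (Zᶜ ∩ interior Lx) ∈ 𝓝 x :=
          Filter.inter_mem (hZc.isClosed.isOpen_compl.mem_nhds hxZ)
            (isOpen_interior.mem_nhds (mem_interior_iff_mem_nhds.2 hLxn))
        obtain ⟨y, hy1, hy2⟩ := mem_closure_iff_nhds.1 hx _ hnb
        exact hy1.1 (hSsub ⟨hy2, interior_subset hy1.2⟩)
      exact hZS hxZ
    exact (isQuotientMap_rqmk Γ).isClosed_preimage.1 hclosed
end
end
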